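/- (Exact per-step solution of the DDS-DDIM probability-flow ODE.) Fix η > 0, a vector c ∈ ℝ^d, a time b > 0, and a terminal value z_b ∈ ℝ^d. Define h(η, u) = −arctan( η / √(u^{−1} − 1) ) for u ∈ (0,1), and define z : (0, b] → ℝ^d by z(s) = √( (η² − 1) e^{−2s} + 1 ) · [ z_b / √( (η² − 1) e^{−2b} + 1 ) + ( h(η, e^{−2s}) − h(η, e^{−2b}) ) · c ] (note (η² − 1) e^{−2s} + 1 = (η² − 1 + e^{2s}) e^{−2s} > 0 for all s > 0). Then z(b) = z_b, z is differentiable on (0, b), and for every s ∈ (0, b): z'(s) = − ( (η² − 1)/(η² + e^{2s} − 1) ) · z(s) + ( η e^{s} / ( √(e^{2s} − 1) · √(η² + e^{2s} − 1) ) ) · c. -/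

import Mathlib

/-- `h(η, u) = −arctan( η / √(u⁻¹ − 1) )` for `u ∈ (0,1)`. -/
noncomputable def hFun (η u : ℝ) : ℝ :=
  -Real.arctan (η / Real.sqrt (u⁻¹ - 1))

/-- The exact per-step solution of the DDS-DDIM probability-flow ODE, with the score/noise
term frozen to the constant vector `c` on the step and terminal value `z_b` at time `b`. -/
noncomputable def zSol {d : ℕ} (η b : ℝ) (c zb : EuclideanSpace ℝ (Fin d)) (s : ℝ) :
    EuclideanSpace ℝ (Fin d) :=
  Real.sqrt ((η ^ 2 - 1) * Real.exp (-2 * s) + 1) •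
    ((Real.sqrt ((η ^ 2 - 1) * Real.exp (-2 * b) + 1))⁻¹ • zb
      + (hFun η (Real.exp (-2 * s)) - hFun η (Real.exp (-2 * b))) • c)

lemma auxPos (η s : ℝ) (hη : 0 < η) (hs : 0 < s) :
    0 < (η ^ 2 - 1) * Real.exp (-2 * s) + 1 := by
  have h1 : Real.exp (-2 * s) < 1 := by
    rw [Real.exp_lt_one_iff]; nlinarith
  have h2 : 0 < Real.exp (-2 * s) := Real.exp_pos _
  nlinarith [sq_nonneg η]

lemma auxEq (η s : ℝ) : (η ^ 2 - 1) * Real.exp (-2 * s) + 1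
    = (η ^ 2 + Real.exp (2 * s) - 1) * Real.exp (-2 * s) := by
  have h : Real.exp (2 * s) * Real.exp (-2 * s) = 1 := by
    rw [← Real.exp_add]; norm_num
  nlinarith [h]

lemma auxPos2 (η s : ℝ) (hη : 0 < η) (hs : 0 < s) :
    0 < η ^ 2 + Real.exp (2 * s) - 1 := by
  nlinarith [Real.add_one_le_exp (2 * s)]

lemma expPos2 (s : ℝ) (hs : 0 < s) : 0 < Real.exp (2 * s) - 1 := by
  nlinarith [Real.add_one_le_exp (2 * s)]

lemma sqrtA_eq (η s : ℝ) (hη : 0 < η) (hs : 0 < s) :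
    Real.sqrt ((η ^ 2 - 1) * Real.exp (-2 * s) + 1)
      = Real.sqrt (η ^ 2 + Real.exp (2 * s) - 1) * Real.exp (-s) := by
  rw [auxEq, Real.sqrt_mul (le_of_lt (auxPos2 η s hη hs))]
  congr 1
  rw [show (-2 : ℝ) * s = (-s) + (-s) by ring, Real.exp_add]
  exact Real.sqrt_mul_self (le_of_lt (Real.exp_pos _))

lemma alg1 (η E F q : ℝ) (hq : 0 < q) (hK : 0 < η ^ 2 + F - 1)
    (hsq : q * q = (η ^ 2 - 1) * E + 1)
    (he : (η ^ 2 - 1) * E + 1 = (η ^ 2 + F - 1) * E) :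
    -((η ^ 2 - 1) / (η ^ 2 + F - 1)) * q = (η ^ 2 - 1) * (E * -2) / (2 * q) := by
  rw [show -((η ^ 2 - 1) / (η ^ 2 + F - 1)) * q = (-(η ^ 2 - 1) * q) / (η ^ 2 + F - 1) from by
      ring,
    div_eq_div_iff (ne_of_gt hK) (by positivity)]
  linear_combination (-2 * (η ^ 2 - 1)) * hsq + (-2 * (η ^ 2 - 1)) * he

lemma alg2 (η F q : ℝ) (hη : 0 < η) (hq : 0 < q) (hK : 0 < η ^ 2 + F - 1)
    (hsq : q * q = F - 1) :
    η * F / (q * (η ^ 2 + F - 1))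
      = -(1 / (1 + (η / q) ^ 2) * (η * (-(F * 2 / (2 * q)) / q ^ 2))) := by
  have h1 : (1 : ℝ) + (η / q) ^ 2 > 0 := by positivity
  field_simp
  linear_combination F * hsq

lemma alg3 (η F es em q1 q2 : ℝ) (hq1 : 0 < q1) (hq2 : 0 < q2) (hK : 0 < η ^ 2 + F - 1)
    (hsq2 : q2 * q2 = η ^ 2 + F - 1) (hem : em * F = es) :
    η * es / (q1 * q2) = q2 * em * (η * F / (q1 * (η ^ 2 + F - 1))) := by
  rw [show q2 * em * (η * F / (q1 * (η ^ 2 + F - 1)))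
      = (q2 * em * (η * F)) / (q1 * (η ^ 2 + F - 1)) from by ring,
    div_eq_div_iff (by positivity) (by positivity)]
  linear_combination (-(η * F * em * q1)) * hsq2 + (-(η * q1 * (η ^ 2 + F - 1))) * hem

lemma derivA (η s : ℝ) (hη : 0 < η) (hs : 0 < s) :
    HasDerivAt (fun t => Real.sqrt ((η ^ 2 - 1) * Real.exp (-2 * t) + 1))
      (-((η ^ 2 - 1) / (η ^ 2 + Real.exp (2 * s) - 1)) *
        Real.sqrt ((η ^ 2 - 1) * Real.exp (-2 * s) + 1)) s := by
  have hf : HasDerivAt (fun t : ℝ => (η ^ 2 - 1) * Real.exp (-2 * t) + 1)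
      ((η ^ 2 - 1) * (Real.exp (-2 * s) * (-2))) s := by
    have : HasDerivAt (fun t : ℝ => -2 * t) (-2) s := by
      simpa using (hasDerivAt_id s).const_mul (-2)
    exact ((this.exp).const_mul _).add_const 1
  have hpos := auxPos η s hη hs
  have hsp := hf.sqrt (ne_of_gt hpos)
  convert hsp using 1
  exact alg1 η (Real.exp (-2 * s)) (Real.exp (2 * s)) _
    (Real.sqrt_pos.mpr hpos) (auxPos2 η s hη hs)
    (Real.mul_self_sqrt (le_of_lt hpos)) (auxEq η s)

lemma hFun_exp (η s : ℝ) : hFun η (Real.exp (-2 * s))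
    = -Real.arctan (η / Real.sqrt (Real.exp (2 * s) - 1)) := by
  unfold hFun
  rw [← Real.exp_neg]
  norm_num

lemma derivH (η s : ℝ) (hη : 0 < η) (hs : 0 < s) :
    HasDerivAt (fun t => hFun η (Real.exp (-2 * t)))
      (η * Real.exp (2 * s) /
        (Real.sqrt (Real.exp (2 * s) - 1) * (η ^ 2 + Real.exp (2 * s) - 1))) s := by
  have heq : (fun t => hFun η (Real.exp (-2 * t)))
      = fun t => -Real.arctan (η / Real.sqrt (Real.exp (2 * t) - 1)) := by
    funext t; exact hFun_exp η t
  rw [heq]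
  have hep := expPos2 s hs
  have hsqrtpos : 0 < Real.sqrt (Real.exp (2 * s) - 1) := Real.sqrt_pos.mpr hep
  have hf : HasDerivAt (fun t : ℝ => Real.exp (2 * t) - 1) (Real.exp (2 * s) * 2) s := by
    have : HasDerivAt (fun t : ℝ => 2 * t) (2) s := by
      simpa using (hasDerivAt_id s).const_mul (2 : ℝ)
    exact (this.exp).sub_const 1
  have hsqrt := hf.sqrt (ne_of_gt hep)
  have hginv := hsqrt.inv (ne_of_gt hsqrtpos)
  have hg : HasDerivAt (fun t => η / Real.sqrt (Real.exp (2 * t) - 1))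
      (η * (-(Real.exp (2 * s) * 2 / (2 * Real.sqrt (Real.exp (2 * s) - 1))) /
        Real.sqrt (Real.exp (2 * s) - 1) ^ 2)) s := by
    simpa [div_eq_mul_inv] using hginv.const_mul η
  have harct := (hg.arctan).neg
  refine harct.congr_deriv (Eq.symm ?_)
  exact alg2 η (Real.exp (2 * s)) _ hη hsqrtpos (auxPos2 η s hη hs)
    (Real.mul_self_sqrt (le_of_lt hep))

/-- `z(b) = z_b`, and on `(0, b)` the curve `z` solves
`z'(s) = −((η²−1)/(η²+e^{2s}−1)) z(s) + (η e^s / (√(e^{2s}−1) √(η²+e^{2s}−1))) c`. -/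
theorem stmt17 {d : ℕ} (η : ℝ) (hη : 0 < η) (b : ℝ) (hb : 0 < b)
    (c zb : EuclideanSpace ℝ (Fin d)) :
    zSol η b c zb b = zb
      ∧ ∀ s ∈ Set.Ioo (0 : ℝ) b,
        HasDerivAt (zSol η b c zb)
          (-((η ^ 2 - 1) / (η ^ 2 + Real.exp (2 * s) - 1)) • zSol η b c zb s
            + (η * Real.exp s /
                (Real.sqrt (Real.exp (2 * s) - 1) * Real.sqrt (η ^ 2 + Real.exp (2 * s) - 1))) • c)
          s := by
  have hbpos := auxPos η b hη hb
  have hsqb : Real.sqrt ((η ^ 2 - 1) * Real.exp (-2 * b) + 1) ≠ 0 :=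
    ne_of_gt (Real.sqrt_pos.mpr hbpos)
  constructor
  · unfold zSol
    rw [sub_self, zero_smul, add_zero, smul_smul, mul_inv_cancel₀ hsqb, one_smul]
  · intro s hsmem
    obtain ⟨hs, _⟩ := hsmem
    have hspos := auxPos η s hη hs
    have h2 := auxPos2 η s hη hs
    have hep := expPos2 s hs
    set Hb := hFun η (Real.exp (-2 * b)) with hHb
    set v := (Real.sqrt ((η ^ 2 - 1) * Real.exp (-2 * b) + 1))⁻¹ • zb with hv
    have hw : HasDerivAt (fun t => v + (hFun η (Real.exp (-2 * t)) - Hb) • c)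
        ((η * Real.exp (2 * s) /
          (Real.sqrt (Real.exp (2 * s) - 1) * (η ^ 2 + Real.exp (2 * s) - 1))) • c) s :=
      (((derivH η s hη hs).sub_const Hb).smul_const c).const_add v
    have key := (derivA η s hη hs).smul hw
    have hz : zSol η b c zb = fun t =>
        Real.sqrt ((η ^ 2 - 1) * Real.exp (-2 * t) + 1) •
          (v + (hFun η (Real.exp (-2 * t)) - Hb) • c) := rfl
    rw [hz]
    refine key.congr_deriv (Eq.symm ?_)
    rw [smul_smul, add_comm, sqrtA_eq η s hη hs,
      alg3 η (Real.exp (2 * s)) (Real.exp s) (Real.exp (-s))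
        (Real.sqrt (Real.exp (2 * s) - 1)) (Real.sqrt (η ^ 2 + Real.exp (2 * s) - 1))
        (Real.sqrt_pos.mpr hep) (Real.sqrt_pos.mpr h2) h2
        (Real.mul_self_sqrt (le_of_lt h2))
        (by rw [← Real.exp_add, show -s + 2 * s = s from by ring])]
    rw [smul_smul]
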